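/- In the bounded-treewidth dynamic program for maximum-ink SPED, for a join node t with children t_1, t_2 and X_t = X_{t_1} = X_{t_2}, and any valid stub set S ⊆ S(X_t), the table entry satisfies W(t, S) = W(t_1, S) + W(t_2, S) − I(S), using that there is no edge of C between V_{t_1} \ X_t and V_{t_2} \ X_t. -/

import Mathlib

open scoped Classical

/-- The stub pairs `(u, ℓ)` with `u ∈ A` and `ℓ` a candidate stub length of `u`. -/
noncomputable def stubPairs {V : Type*} (cand : V → Finset ℝ) (A : Finset V) :
    Finset (V × ℝ) :=
  A.biUnion fun u => (cand u).image fun l => (u, l)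

/-- A stub set over the vertex set `A` is valid if it contains exactly one candidate stub
pair per vertex of `A` and no two of its pairs intersect. -/
def ValidStubSet {V : Type*} (cand : V → Finset ℝ) (meets : V → ℝ → V → ℝ → Prop)
    (A : Finset V) (S : Finset (V × ℝ)) : Prop :=
  S ⊆ stubPairs cand A ∧ (∀ u ∈ A, ∃! l : ℝ, (u, l) ∈ S) ∧
  ∀ p ∈ S, ∀ q ∈ S, p.1 ≠ q.1 → ¬ meets p.1 p.2 q.1 q.2

/-- The ink of a stub set: the total stub length. -/
noncomputable def inkOf {V : Type*} (S : Finset (V × ℝ)) : ℝ := ∑ p ∈ S, p.2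

/-- The dynamic-programming table: `Wtab cand meets X Vt S` is the maximum ink of a valid
stub set `T` on `Vt` with `S ⊆ T` and `T ∩ S(X) = S` (and `⊥ = -∞` if none exists). -/
noncomputable def Wtab {V : Type*} (cand : V → Finset ℝ)
    (meets : V → ℝ → V → ℝ → Prop) (X Vt : Finset V) (S : Finset (V × ℝ)) : EReal :=
  sSup {x : EReal | ∃ T : Finset (V × ℝ), ValidStubSet cand meets Vt T ∧
    S ⊆ T ∧ T ∩ stubPairs cand X = S ∧ x = (inkOf T : EReal)}


lemma mem_stubPairs' {V : Type*} (cand : V → Finset ℝ) (A : Finset V) (p : V × ℝ) :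
    p ∈ stubPairs cand A ↔ p.1 ∈ A ∧ p.2 ∈ cand p.1 := by
  obtain ⟨u, l⟩ := p
  simp [stubPairs, eq_comm, and_comm]

lemma stubPairs_mono {V : Type*} (cand : V → Finset ℝ) {A B : Finset V} (h : A ⊆ B) :
    stubPairs cand A ⊆ stubPairs cand B := by
  intro p hp
  rw [mem_stubPairs'] at *
  exact ⟨h hp.1, hp.2⟩

/-- restriction of a valid stub set on `Vt` to a middle set `Vt'`. -/
lemma restrict_valid {V : Type*} [DecidableEq V] (cand : V → Finset ℝ)
    (meets : V → ℝ → V → ℝ → Prop) {Xt Vt' Vt : Finset V} {S T : Finset (V × ℝ)}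
    (hX : Xt ⊆ Vt') (hsub : Vt' ⊆ Vt)
    (hT : ValidStubSet cand meets Vt T) (hTX : T ∩ stubPairs cand Xt = S) :
    ValidStubSet cand meets Vt' (T ∩ stubPairs cand Vt') ∧
      S ⊆ T ∩ stubPairs cand Vt' ∧
      (T ∩ stubPairs cand Vt') ∩ stubPairs cand Xt = S := by
  obtain ⟨hTsub, hTuniq, hTmeet⟩ := hT
  refine ⟨⟨Finset.inter_subset_right, ?_, ?_⟩, ?_, ?_⟩
  · intro u hu
    obtain ⟨l, hl, hun⟩ := hTuniq u (hsub hu)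
    refine ⟨l, Finset.mem_inter.mpr ⟨hl, ?_⟩, fun l' h' => hun l' (Finset.mem_inter.mp h').1⟩
    rw [mem_stubPairs']
    exact ⟨hu, ((mem_stubPairs' cand Vt _).mp (hTsub hl)).2⟩
  · intro p hp q hq hne
    exact hTmeet p (Finset.mem_inter.mp hp).1 q (Finset.mem_inter.mp hq).1 hne
  · rw [← hTX]
    intro p hp
    rw [Finset.mem_inter] at hp ⊢
    exact ⟨hp.1, stubPairs_mono cand hX hp.2⟩
  · rw [Finset.inter_assoc, Finset.inter_eq_right.mpr (stubPairs_mono cand hX), hTX]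

/-- combination of valid stub sets on `Vt₁`, `Vt₂` agreeing (exactly) on `S`. -/
lemma combine_valid {V : Type*} [DecidableEq V] (cand : V → Finset ℝ)
    (meets : V → ℝ → V → ℝ → Prop)
    (meets_symm : ∀ u a w b, meets u a w b → meets w b u a)
    {Xt Vt₁ Vt₂ Vt : Finset V}
    (hVt : Vt = Vt₁ ∪ Vt₂) (hcap : Vt₁ ∩ Vt₂ = Xt)
    (hsep : ∀ u ∈ Vt₁ \ Xt, ∀ w ∈ Vt₂ \ Xt, ∀ a b : ℝ, ¬ meets u a w b)
    {S T₁ T₂ : Finset (V × ℝ)}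
    (h₁ : ValidStubSet cand meets Vt₁ T₁) (hS₁ : S ⊆ T₁)
    (hX₁ : T₁ ∩ stubPairs cand Xt = S)
    (h₂ : ValidStubSet cand meets Vt₂ T₂) (hS₂ : S ⊆ T₂)
    (hX₂ : T₂ ∩ stubPairs cand Xt = S) :
    ValidStubSet cand meets Vt (T₁ ∪ T₂) ∧ S ⊆ T₁ ∪ T₂ ∧
      (T₁ ∪ T₂) ∩ stubPairs cand Xt = S ∧ T₁ ∩ T₂ = S := by
  obtain ⟨hT₁sub, hT₁uniq, hT₁meet⟩ := h₁
  obtain ⟨hT₂sub, hT₂uniq, hT₂meet⟩ := h₂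
  -- a pair of T₂ over a vertex of Xt is in S (hence in T₁), and symmetrically
  have key₂ : ∀ p ∈ T₂, p.1 ∈ Xt → p ∈ S := by
    intro p hp hpx
    rw [← hX₂, Finset.mem_inter]
    exact ⟨hp, (mem_stubPairs' cand Xt p).mpr ⟨hpx, ((mem_stubPairs' cand Vt₂ p).mp (hT₂sub hp)).2⟩⟩
  have key₁ : ∀ p ∈ T₁, p.1 ∈ Xt → p ∈ S := by
    intro p hp hpx
    rw [← hX₁, Finset.mem_inter]
    exact ⟨hp, (mem_stubPairs' cand Xt p).mpr ⟨hpx, ((mem_stubPairs' cand Vt₁ p).mp (hT₁sub hp)).2⟩⟩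
  have mem₁ : ∀ p ∈ T₁, p.1 ∈ Vt₁ := fun p hp => ((mem_stubPairs' cand Vt₁ p).mp (hT₁sub hp)).1
  have mem₂ : ∀ p ∈ T₂, p.1 ∈ Vt₂ := fun p hp => ((mem_stubPairs' cand Vt₂ p).mp (hT₂sub hp)).1
  have cross : ∀ p ∈ T₁, ∀ q ∈ T₂, p.1 ≠ q.1 → ¬ meets p.1 p.2 q.1 q.2 := by
    intro p hp q hq hne
    by_cases hpx : p.1 ∈ Xt
    · exact hT₂meet p (hS₂ (key₁ p hp hpx)) q hq hne
    by_cases hqx : q.1 ∈ Xt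
    · exact hT₁meet p hp q (hS₁ (key₂ q hq hqx)) hne
    · exact hsep p.1 (Finset.mem_sdiff.mpr ⟨mem₁ p hp, hpx⟩) q.1
        (Finset.mem_sdiff.mpr ⟨mem₂ q hq, hqx⟩) p.2 q.2
  have hcapT : T₁ ∩ T₂ = S := by
    apply Finset.Subset.antisymm
    · intro p hp
      rw [Finset.mem_inter] at hp
      refine key₁ p hp.1 ?_
      rw [← hcap, Finset.mem_inter]
      exact ⟨mem₁ p hp.1, mem₂ p hp.2⟩
    · exact Finset.subset_inter hS₁ hS₂
  refine ⟨⟨?_, ?_, ?_⟩, hS₁.trans Finset.subset_union_left, ?_, hcapT⟩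
  · intro p hp
    rw [mem_stubPairs']
    rcases Finset.mem_union.mp hp with h | h
    · exact ⟨hVt ▸ Finset.mem_union.mpr (Or.inl (mem₁ p h)),
        ((mem_stubPairs' cand Vt₁ p).mp (hT₁sub h)).2⟩
    · exact ⟨hVt ▸ Finset.mem_union.mpr (Or.inr (mem₂ p h)),
        ((mem_stubPairs' cand Vt₂ p).mp (hT₂sub h)).2⟩
  · intro u hu
    rw [hVt, Finset.mem_union] at hu
    rcases hu with hu | hu
    · obtain ⟨l, hl, hun⟩ := hT₁uniq u hu
      refine ⟨l, Finset.mem_union.mpr (Or.inl hl), ?_⟩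
      intro l' h'
      rcases Finset.mem_union.mp h' with h' | h'
      · exact hun l' h'
      · have hux : u ∈ Xt := by
          rw [← hcap, Finset.mem_inter]
          exact ⟨hu, mem₂ (u, l') h'⟩
        exact hun l' (hS₁ (key₂ (u, l') h' hux))
    · obtain ⟨l, hl, hun⟩ := hT₂uniq u hu
      refine ⟨l, Finset.mem_union.mpr (Or.inr hl), ?_⟩
      intro l' h'
      rcases Finset.mem_union.mp h' with h' | h'
      · have hux : u ∈ Xt := by
          rw [← hcap, Finset.mem_inter]
          exact ⟨mem₁ (u, l') h', hu⟩
        exact hun l' (hS₂ (key₁ (u, l') h' hux))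
      · exact hun l' h'
  · intro p hp q hq hne
    rcases Finset.mem_union.mp hp with hp' | hp' <;> rcases Finset.mem_union.mp hq with hq' | hq'
    · exact hT₁meet p hp' q hq' hne
    · exact cross p hp' q hq' hne
    · intro h
      exact cross q hq' p hp' hne.symm (meets_symm _ _ _ _ h)
    · exact hT₂meet p hp' q hq' hne
  · rw [Finset.union_inter_distrib_right, hX₁, hX₂, Finset.union_self]

lemma inter_eq_inter {α : Type*} {i₁ i₂ : DecidableEq α} (s t : Finset α) :
    @Inter.inter _ (@Finset.instInter α i₁) s t =
      @Inter.inter _ (@Finset.instInter α i₂) s t := by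
  cases Subsingleton.elim i₁ i₂
  rfl

lemma le_Wtab {V : Type*} (cand : V → Finset ℝ) (meets : V → ℝ → V → ℝ → Prop)
    (X Vt : Finset V) (S T : Finset (V × ℝ)) (hT : ValidStubSet cand meets Vt T)
    (h1 : S ⊆ T) (h2 : T ∩ stubPairs cand X = S) :
    (inkOf T : EReal) ≤ Wtab cand meets X Vt S :=
  le_sSup ⟨T, hT, h1, h2, rfl⟩

lemma Wtab_le {V : Type*} (cand : V → Finset ℝ) (meets : V → ℝ → V → ℝ → Prop)
    (X Vt : Finset V) (S : Finset (V × ℝ)) (y : EReal)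
    (h : ∀ T, ValidStubSet cand meets Vt T → S ⊆ T → T ∩ stubPairs cand X = S →
      (inkOf T : EReal) ≤ y) :
    Wtab cand meets X Vt S ≤ y := by
  apply sSup_le
  rintro x ⟨T, hT, h1, h2, rfl⟩
  exact h T hT h1 h2

lemma Wtab_cases {V : Type*} (cand : V → Finset ℝ) (meets : V → ℝ → V → ℝ → Prop)
    (X Vt : Finset V) (S : Finset (V × ℝ)) :
    Wtab cand meets X Vt S = ⊥ ∨ ∃ T, ValidStubSet cand meets Vt T ∧ S ⊆ T ∧
      T ∩ stubPairs cand X = S ∧ Wtab cand meets X Vt S = (inkOf T : EReal) := by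
  set A : Set EReal := {x : EReal | ∃ T : Finset (V × ℝ), ValidStubSet cand meets Vt T ∧
    S ⊆ T ∧ T ∩ stubPairs cand X = S ∧ x = (inkOf T : EReal)} with hAdef
  have hW : Wtab cand meets X Vt S = sSup A := rfl
  have hAfin : A.Finite := by
    apply Set.Finite.subset
      (((stubPairs cand Vt).powerset : Finset (Finset (V × ℝ))).finite_toSet.image
        fun T => ((inkOf T : ℝ) : EReal))
    rintro x ⟨T, hT, -, -, rfl⟩
    exact ⟨T, by simpa using hT.1, rfl⟩
  rcases Set.eq_empty_or_nonempty A with hA | hA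
  · left; rw [hW, hA, sSup_empty]
  · right
    obtain ⟨T, hT, h1, h2, h3⟩ := hA.csSup_mem hAfin
    exact ⟨T, hT, h1, h2, hW ▸ h3⟩

/-- the join-node recurrence of the bounded-treewidth DP for MaxSPED.
At a join node `t` with children `t₁, t₂`, `X_t = X_{t₁} = X_{t₂}`,
`V_t = V_{t₁} ∪ V_{t₂}`, `V_{t₁} ∩ V_{t₂} = X_t`, and no stub of a vertex in
`V_{t₁} \ X_t` intersects a stub of a vertex in `V_{t₂} \ X_t` (no edge of C between
those sets).  For any valid stub set `S ⊆ S(X_t)`,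
`W(t, S) = W(t₁, S) + W(t₂, S) − I(S)`. -/
theorem stmt_10 {V : Type*} [DecidableEq V] (cand : V → Finset ℝ)
    (meets : V → ℝ → V → ℝ → Prop)
    (meets_symm : ∀ u a w b, meets u a w b → meets w b u a)
    (Xt Vt₁ Vt₂ Vt : Finset V)
    (hX₁ : Xt ⊆ Vt₁) (hX₂ : Xt ⊆ Vt₂)
    (hVt : Vt = Vt₁ ∪ Vt₂) (hcap : Vt₁ ∩ Vt₂ = Xt)
    (hsep : ∀ u ∈ Vt₁ \ Xt, ∀ w ∈ Vt₂ \ Xt, ∀ a b : ℝ, ¬ meets u a w b)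
    (S : Finset (V × ℝ)) (hS : ValidStubSet cand meets Xt S) :
    Wtab cand meets Xt Vt S =
      Wtab cand meets Xt Vt₁ S + Wtab cand meets Xt Vt₂ S - (inkOf S : EReal) := by
  classical
  have hSP : stubPairs cand Vt = stubPairs cand Vt₁ ∪ stubPairs cand Vt₂ := by
    ext p
    rw [Finset.mem_union, mem_stubPairs', mem_stubPairs', mem_stubPairs', hVt,
      Finset.mem_union]
    tauto
  have hSPi : stubPairs cand Vt₁ ∩ stubPairs cand Vt₂ = stubPairs cand Xt := by
    ext p
    rw [Finset.mem_inter, mem_stubPairs', mem_stubPairs', mem_stubPairs', ← hcap,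
      Finset.mem_inter]
    tauto
  have decompT : ∀ T, ValidStubSet cand meets Vt T → S ⊆ T → T ∩ stubPairs cand Xt = S →
      (ValidStubSet cand meets Vt₁ (T ∩ stubPairs cand Vt₁) ∧
        S ⊆ T ∩ stubPairs cand Vt₁ ∧
        (T ∩ stubPairs cand Vt₁) ∩ stubPairs cand Xt = S) ∧
      (ValidStubSet cand meets Vt₂ (T ∩ stubPairs cand Vt₂) ∧
        S ⊆ T ∩ stubPairs cand Vt₂ ∧
        (T ∩ stubPairs cand Vt₂) ∩ stubPairs cand Xt = S) ∧
      inkOf T = inkOf (T ∩ stubPairs cand Vt₁) + inkOf (T ∩ stubPairs cand Vt₂)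
        - inkOf S := by
    intro T hT hST hTX
    refine ⟨restrict_valid cand meets hX₁
      (by rw [hVt]; exact Finset.subset_union_left) hT hTX,
      restrict_valid cand meets hX₂
      (by rw [hVt]; exact Finset.subset_union_right) hT hTX, ?_⟩
    have hun : (T ∩ stubPairs cand Vt₁) ∪ (T ∩ stubPairs cand Vt₂) = T := by
      rw [← Finset.inter_union_distrib_left, ← hSP, Finset.inter_eq_left.mpr hT.1]
    have hint : (T ∩ stubPairs cand Vt₁) ∩ (T ∩ stubPairs cand Vt₂) = S := by
      have h0 : (T ∩ stubPairs cand Vt₁) ∩ (T ∩ stubPairs cand Vt₂) =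
          T ∩ (stubPairs cand Vt₁ ∩ stubPairs cand Vt₂) := by
        ext p; simp only [Finset.mem_inter]; tauto
      rw [h0, hSPi, hTX]
    have h0 := Finset.sum_union_inter (s₁ := T ∩ stubPairs cand Vt₁)
      (s₂ := T ∩ stubPairs cand Vt₂) (f := fun p : V × ℝ => p.2)
    rw [hun, hint] at h0
    have h0' : inkOf T + inkOf S =
        inkOf (T ∩ stubPairs cand Vt₁) + inkOf (T ∩ stubPairs cand Vt₂) := by
      simpa [inkOf] using h0
    linarith
  rcases Wtab_cases cand meets Xt Vt₁ S with h1 | ⟨T₁, hT₁, hs1, hx1, hW1⟩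
  · have hbot : Wtab cand meets Xt Vt S = ⊥ := by
      apply le_bot_iff.mp
      apply Wtab_le
      intro T hT hST hTX
      have hTX' : T ∩ stubPairs cand Xt = S := (inter_eq_inter _ _).trans hTX
      obtain ⟨⟨h1v, h1s, h1x⟩, -, -⟩ := decompT T hT hST hTX'
      have hle := le_Wtab cand meets Xt Vt₁ S _ h1v h1s ((inter_eq_inter _ _).trans h1x)
      rw [h1] at hle
      exact absurd (le_bot_iff.mp hle) (EReal.coe_ne_bot _)
    rw [hbot, h1, EReal.bot_add]
    simp
  rcases Wtab_cases cand meets Xt Vt₂ S with h2 | ⟨T₂, hT₂, hs2, hx2, hW2⟩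
  · have hbot : Wtab cand meets Xt Vt S = ⊥ := by
      apply le_bot_iff.mp
      apply Wtab_le
      intro T hT hST hTX
      have hTX' : T ∩ stubPairs cand Xt = S := (inter_eq_inter _ _).trans hTX
      obtain ⟨-, ⟨h2v, h2s, h2x⟩, -⟩ := decompT T hT hST hTX'
      have hle := le_Wtab cand meets Xt Vt₂ S _ h2v h2s ((inter_eq_inter _ _).trans h2x)
      rw [h2] at hle
      exact absurd (le_bot_iff.mp hle) (EReal.coe_ne_bot _)
    rw [hbot, h2, EReal.add_bot]
    simp
  · apply le_antisymm
    · apply Wtab_le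
      intro T hT hST hTX
      have hTX' : T ∩ stubPairs cand Xt = S := (inter_eq_inter _ _).trans hTX
      obtain ⟨⟨h1v, h1s, h1x⟩, ⟨h2v, h2s, h2x⟩, hink⟩ := decompT T hT hST hTX'
      have hle₁ := le_Wtab cand meets Xt Vt₁ S _ h1v h1s ((inter_eq_inter _ _).trans h1x)
      have hle₂ := le_Wtab cand meets Xt Vt₂ S _ h2v h2s ((inter_eq_inter _ _).trans h2x)
      rw [hink, EReal.coe_sub, EReal.coe_add]
      exact EReal.sub_le_sub (add_le_add hle₁ hle₂) le_rfl
    · have hx1' : T₁ ∩ stubPairs cand Xt = S := (inter_eq_inter _ _).trans hx1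
      have hx2' : T₂ ∩ stubPairs cand Xt = S := (inter_eq_inter _ _).trans hx2
      obtain ⟨hv, hs, hx, hcapT⟩ := combine_valid cand meets meets_symm hVt hcap hsep
        hT₁ hs1 hx1' hT₂ hs2 hx2'
      have hle := le_Wtab cand meets Xt Vt S _ hv hs ((inter_eq_inter _ _).trans hx)
      have h0 := Finset.sum_union_inter (s₁ := T₁) (s₂ := T₂) (f := fun p : V × ℝ => p.2)
      rw [hcapT] at h0
      have h0' : inkOf (T₁ ∪ T₂) + inkOf S = inkOf T₁ + inkOf T₂ := by
        simpa [inkOf] using h0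
      have hink : inkOf (T₁ ∪ T₂) = inkOf T₁ + inkOf T₂ - inkOf S := by linarith
      rw [hW1, hW2, ← EReal.coe_add, ← EReal.coe_sub, ← hink]
      exact hle
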